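/- Let η̃ = dq·q̄ + dp·p̄ - q·dq̄ - p·dp̄ be the standard quaternion-valued contact form on the unit sphere S ⊂ ℍⁿ×ℍ and Θ̃ the standard contact form on the Heisenberg group boundary Σ, given by 4Θ̃ = (dp̄' - dp') + 2dq'·q̄' - 2q'·dq̄'. Then under the Cayley transform C the pullback satisfies 2 C*Θ̃ = (1/|1+p|²) λ · η̃ · λ̄, where λ = |1+p|(1+p)⁻¹ is a unit quaternion. In particular, the Cayley transform is a conformal quaternionic contact transformation: C*Θ̃ and η̃ differ by a positive conformal factor 1/(2|1+p|²) and conjugation by the unit quaternion λ (an SO(3) rotation of the three components). -/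

import Mathlib

set_option maxHeartbeats 1000000

open scoped Quaternion
open ContinuousLinearMap

/-- The standard quaternion-valued contact form on the unit sphere `S ⊂ ℍⁿ × ℍ`,
evaluated at `x` on a tangent vector `v`:
`η̃ = dq·q̄ + dp·p̄ - q·dq̄ - p·dp̄`. -/
noncomputable def sphereEta {n : ℕ} (x v : (Fin n → ℍ[ℝ]) × ℍ[ℝ]) : ℍ[ℝ] :=
  (∑ α, v.1 α * star (x.1 α)) + v.2 * star x.2 -
    (∑ α, x.1 α * star (v.1 α)) - x.2 * star v.2

/-- The standard contact form on the boundary `Σ` of the Siegel domain: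
`4Θ̃ = (dp̄' - dp') + 2dq'·q̄' - 2q'·dq̄'`. -/
noncomputable def heisTheta {n : ℕ} (x w : (Fin n → ℍ[ℝ]) × ℍ[ℝ]) : ℍ[ℝ] :=
  (4:ℝ)⁻¹ • ((star w.2 - w.2) + 2 * (∑ α, w.1 α * star (x.1 α)) -
    2 * (∑ α, x.1 α * star (w.1 α)))

/-- The Cayley transform `(q,p) ↦ ((1+p)⁻¹q, (1+p)⁻¹(1-p))`. -/
noncomputable def cayleyMap {n : ℕ} (x : (Fin n → ℍ[ℝ]) × ℍ[ℝ]) :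
    (Fin n → ℍ[ℝ]) × ℍ[ℝ] :=
  (fun α => (1 + x.2)⁻¹ * x.1 α, (1 + x.2)⁻¹ * (1 - x.2))

/-- The Cayley transform is a conformal quaternionic contact transformation: on the unit
sphere, `2 C*Θ̃ = (1/|1+p|²) λ·η̃·λ̄` with `λ = |1+p|(1+p)⁻¹` a unit quaternion, i.e.
the pullback of the standard structure of the quaternionic Heisenberg group differs from
the standard structure of the sphere by the positive conformal factor `1/(2|1+p|²)` and
the `SO(3)` rotation given by conjugation by `λ`. -/
theorem cayley_conformal_contact {n : ℕ} (x : (Fin n → ℍ[ℝ]) × ℍ[ℝ])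
    (hS : (∑ α, Quaternion.normSq (x.1 α)) + Quaternion.normSq x.2 = 1)
    (hp : x.2 ≠ -1) :
    ‖(‖1 + x.2‖ • (1 + x.2)⁻¹ : ℍ[ℝ])‖ = 1 ∧
    ∀ v : (Fin n → ℍ[ℝ]) × ℍ[ℝ],
      ((∑ α, v.1 α * star (x.1 α)) + v.2 * star x.2).re = 0 →
      (2:ℝ) • heisTheta (cayleyMap x) (fderiv ℝ cayleyMap x v) =
        (Quaternion.normSq (1 + x.2))⁻¹ •
          ((‖1 + x.2‖ • (1 + x.2)⁻¹ : ℍ[ℝ]) * sphereEta x v *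
            star (‖1 + x.2‖ • (1 + x.2)⁻¹ : ℍ[ℝ])) := by
  have hu : (1 : ℍ[ℝ]) + x.2 ≠ 0 := fun h => hp (eq_neg_of_add_eq_zero_right h)
  constructor
  · rw [norm_smul, norm_inv, norm_norm, mul_inv_cancel₀ (norm_ne_zero_iff.2 hu)]
  intro v _
  set u : ℍ[ℝ] := 1 + x.2 with hu_def
  set a : ℍ[ℝ] := u⁻¹ with ha_def
  -- the derivative of the Cayley map
  have h1 : HasFDerivAt (fun y : (Fin n → ℍ[ℝ]) × ℍ[ℝ] => 1 + y.2)
      (snd ℝ (Fin n → ℍ[ℝ]) ℍ[ℝ]) x := (hasFDerivAt_snd).const_add 1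
  have hinv : HasFDerivAt (fun y : (Fin n → ℍ[ℝ]) × ℍ[ℝ] => (1 + y.2)⁻¹)
      ((-mulLeftRight ℝ ℍ[ℝ] a a).comp (snd ℝ (Fin n → ℍ[ℝ]) ℍ[ℝ])) x :=
    (hasFDerivAt_inv' hu).comp x h1
  have hq : ∀ α : Fin n, HasFDerivAt (fun y : (Fin n → ℍ[ℝ]) × ℍ[ℝ] => y.1 α)
      ((proj α).comp (fst ℝ (Fin n → ℍ[ℝ]) ℍ[ℝ])) x :=
    fun α => ((proj α).comp (fst ℝ (Fin n → ℍ[ℝ]) ℍ[ℝ])).hasFDerivAt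
  have hone : HasFDerivAt (fun y : (Fin n → ℍ[ℝ]) × ℍ[ℝ] => 1 - y.2)
      (-(snd ℝ (Fin n → ℍ[ℝ]) ℍ[ℝ])) x := (hasFDerivAt_snd).const_sub 1
  have hD : HasFDerivAt (cayleyMap (n := n))
      ((ContinuousLinearMap.pi fun α =>
        a • ((proj α).comp (fst ℝ (Fin n → ℍ[ℝ]) ℍ[ℝ])) +
        (((-mulLeftRight ℝ ℍ[ℝ] a a).comp (snd ℝ (Fin n → ℍ[ℝ]) ℍ[ℝ])).smulRight (x.1 α))).prod
       (a • (-(snd ℝ (Fin n → ℍ[ℝ]) ℍ[ℝ])) +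
        (((-mulLeftRight ℝ ℍ[ℝ] a a).comp (snd ℝ (Fin n → ℍ[ℝ]) ℍ[ℝ])).smulRight (1 - x.2)))) x :=
    HasFDerivAt.prodMk (hasFDerivAt_pi.2 fun α => hinv.mul' (hq α)) (hinv.mul' hone)
  rw [hD.fderiv]
  simp only [heisTheta, cayleyMap, sphereEta, ContinuousLinearMap.prod_apply,
    ContinuousLinearMap.pi_apply, ContinuousLinearMap.add_apply,
    ContinuousLinearMap.smul_apply, ContinuousLinearMap.comp_apply,
    ContinuousLinearMap.proj_apply, ContinuousLinearMap.coe_fst',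
    ContinuousLinearMap.coe_snd', ContinuousLinearMap.neg_apply,
    ContinuousLinearMap.smulRight_apply, mulLeftRight_apply, smul_eq_mul]
  simp only [← hu_def, ← ha_def]
  -- abbreviations
  set N : ℝ := Quaternion.normSq u with hN_def
  set Q : ℝ := ∑ α, Quaternion.normSq (x.1 α) with hQ_def
  set A : ℍ[ℝ] := ∑ α, v.1 α * star (x.1 α) with hA_def
  set B : ℍ[ℝ] := ∑ α, x.1 α * star (v.1 α) with hB_def
  clear_value A B Q N a u
  have hN : N ≠ 0 := by rw [hN_def]; exact Quaternion.normSq_ne_zero.2 hu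
  have hQval : Q = 1 - Quaternion.normSq x.2 := by linarith
  -- basic quaternion facts
  have hcoe : ∀ r : ℝ, (r : ℍ[ℝ]) = r • (1 : ℍ[ℝ]) := fun r => by
    rw [← Quaternion.coe_one, Quaternion.smul_coe, mul_one]
  have hainv : a = N⁻¹ • star u := by rw [ha_def, hN_def, Quaternion.inv_def]
  have hsa : star a = N⁻¹ • u := by simp [hainv]
  have hkey : star u - ((Q : ℝ) : ℍ[ℝ]) = star x.2 * u := by
    rw [hu_def]
    simp only [star_add, star_one]
    rw [mul_add, mul_one, Quaternion.star_mul_self, hQval]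
    push_cast
    abel
  have hk1 : a - (Q * N⁻¹) • (1:ℍ[ℝ]) = star x.2 * star a := by
    rw [hsa, mul_smul_comm, ← hkey, hainv, hcoe Q]
    module
  have hk2 : star a - (Q * N⁻¹) • (1:ℍ[ℝ]) = a * x.2 := by
    have h := congrArg star hk1
    simpa [star_sub, star_smul, star_one, star_mul, star_star] using h
  have haa2 : a * star a = ((N⁻¹ : ℝ) : ℍ[ℝ]) := by
    rw [ha_def, star_inv₀, ← mul_inv_rev, Quaternion.star_mul_self, ← hN_def,
      ← Quaternion.coe_inv]
  -- the second component of the derivative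
  have h2a : a * (1 - x.2) + 1 = (2:ℝ) • a := by
    have h1' : (1:ℍ[ℝ]) = a * u := by rw [ha_def]; exact (inv_mul_cancel₀ hu).symm
    calc a * (1 - x.2) + 1 = a * (1 - x.2) + a * u := by rw [← h1']
      _ = a * (1 - x.2) + a * (1 + x.2) := by rw [hu_def]
      _ = a * 2 := by noncomm_ring
      _ = (2:ℝ) • a := by rw [mul_two, two_smul]
  have hw2 : a * -v.2 + -(a * v.2 * a) * (1 - x.2) = -((2:ℝ) • (a * v.2 * a)) := by
    calc a * -v.2 + -(a * v.2 * a) * (1 - x.2)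
        = -(a * v.2 * (a * (1 - x.2) + 1)) := by noncomm_ring
      _ = -(a * v.2 * ((2:ℝ) • a)) := by rw [h2a]
      _ = -((2:ℝ) • (a * v.2 * a)) := by rw [mul_smul_comm]
  have hstarE : star (a * v.2 * a) = star a * star v.2 * star a := by
    simp only [star_mul, mul_assoc]
  -- towards the sum computations
  have hEsa : a * v.2 * a * star a = N⁻¹ • (a * v.2) := by
    rw [mul_assoc (a * v.2) a (star a), haa2, Quaternion.mul_coe_eq_smul]
  have hF : a * (star a * star v.2 * star a) = N⁻¹ • (star v.2 * star a) := by
    rw [mul_assoc (star a) (star v.2) (star a), ← mul_assoc a (star a) _, haa2,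
      Quaternion.coe_mul_eq_smul]
  have hterm1 : ∀ α : Fin n, (a * v.1 α + -(a * v.2 * a) * x.1 α) * star (a * x.1 α)
      = a * (v.1 α * star (x.1 α)) * star a
        - Quaternion.normSq (x.1 α) • (a * v.2 * a * star a) := by
    intro α
    rw [star_mul]
    calc (a * v.1 α + -(a * v.2 * a) * x.1 α) * (star (x.1 α) * star a)
        = a * (v.1 α * star (x.1 α)) * star a
          - a * v.2 * a * (x.1 α * star (x.1 α)) * star a := by noncomm_ring
      _ = _ := by
          rw [Quaternion.self_mul_star, Quaternion.mul_coe_eq_smul, smul_mul_assoc]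
  have hterm2 : ∀ α : Fin n, a * x.1 α * star (a * v.1 α + -(a * v.2 * a) * x.1 α)
      = a * (x.1 α * star (v.1 α)) * star a
        - Quaternion.normSq (x.1 α) • (a * (star a * star v.2 * star a)) := by
    intro α
    simp only [star_add, star_neg, star_mul]
    calc a * x.1 α * (star (v.1 α) * star a + star (x.1 α) * -(star a * (star v.2 * star a)))
        = a * (x.1 α * star (v.1 α)) * star a
          - a * (x.1 α * star (x.1 α)) * (star a * star v.2 * star a) := by noncomm_ring
      _ = _ := by
          rw [Quaternion.self_mul_star, Quaternion.mul_coe_eq_smul, smul_mul_assoc]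
  -- the sums
  have hsum1 : ∑ α : Fin n, (a * v.1 α + -(a * v.2 * a) * x.1 α) * star (a * x.1 α)
      = a * A * star a - (Q * N⁻¹) • (a * v.2) := by
    rw [Finset.sum_congr rfl fun α _ => hterm1 α, Finset.sum_sub_distrib,
      ← Finset.sum_smul, ← Finset.sum_mul, ← Finset.mul_sum, ← hA_def, ← hQ_def,
      hEsa, smul_smul]
  have hsum2 : ∑ α : Fin n, a * x.1 α * star (a * v.1 α + -(a * v.2 * a) * x.1 α)
      = a * B * star a - (Q * N⁻¹) • (star v.2 * star a) := by
    rw [Finset.sum_congr rfl fun α _ => hterm2 α, Finset.sum_sub_distrib,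
      ← Finset.sum_smul, ← Finset.sum_mul, ← Finset.mul_sum, ← hB_def, ← hQ_def,
      hF, smul_smul]
  -- the conformal factor on the right-hand side
  have hconf : ∀ z : ℍ[ℝ], N⁻¹ • (‖u‖ • a * z * star (‖u‖ • a))
      = a * z * star a := by
    intro z
    rw [Quaternion.star_smul, smul_mul_assoc, smul_mul_assoc, mul_smul_comm,
      smul_smul, smul_smul]
    rw [show N⁻¹ * ‖u‖ * ‖u‖ = 1 by
      rw [mul_assoc, ← Quaternion.normSq_eq_norm_mul_self, ← hN_def]
      exact inv_mul_cancel₀ hN, one_smul]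
  -- the two key identities
  have hI : a * v.2 * a - (Q * N⁻¹) • (a * v.2) = a * v.2 * (star x.2 * star a) := by
    calc a * v.2 * a - (Q * N⁻¹) • (a * v.2)
        = a * v.2 * (a - (Q * N⁻¹) • 1) := by
          rw [mul_sub, mul_smul_comm, mul_one]
      _ = a * v.2 * (star x.2 * star a) := by rw [hk1]
  have hII : star a * star v.2 * star a - (Q * N⁻¹) • (star v.2 * star a)
      = a * x.2 * (star v.2 * star a) := by
    calc star a * star v.2 * star a - (Q * N⁻¹) • (star v.2 * star a)
        = (star a - (Q * N⁻¹) • 1) * (star v.2 * star a) := by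
          rw [sub_mul, smul_mul_assoc, one_mul, mul_assoc]
      _ = a * x.2 * (star v.2 * star a) := by rw [hk2]
  -- assembling
  rw [hw2, hsum1, hsum2, hconf, star_neg, Quaternion.star_smul, hstarE]
  have h2mul : ∀ z : ℍ[ℝ], (2 : ℍ[ℝ]) * z = (2:ℝ) • z := fun z => by
    rw [two_mul, two_smul]
  rw [h2mul, h2mul]
  calc (2:ℝ) • (4:ℝ)⁻¹ • (-((2:ℝ) • (star a * star v.2 * star a)) - -((2:ℝ) • (a * v.2 * a))
          + (2:ℝ) • (a * A * star a - (Q * N⁻¹) • (a * v.2))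
          - (2:ℝ) • (a * B * star a - (Q * N⁻¹) • (star v.2 * star a)))
      = (a * v.2 * a - (Q * N⁻¹) • (a * v.2))
          - (star a * star v.2 * star a - (Q * N⁻¹) • (star v.2 * star a))
          + a * A * star a - a * B * star a := by module
    _ = a * v.2 * (star x.2 * star a) - a * x.2 * (star v.2 * star a)
          + a * A * star a - a * B * star a := by rw [hI, hII]
    _ = a * (A + v.2 * star x.2 - B - x.2 * star v.2) * star a := by noncomm_ring
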